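/- Let α be a type. For every 2CNF formula φ over α there exists a 2CNF formula ψ over the type α ⊕ ℕ such that every clause of ψ has positive polarity (both of its literals carry the same sign, i.e., both are positive or both are negative), and φ is satisfiable if and only if ψ is satisfiable. (Hence every instance of 2SAT is correctly reduced to an instance of Polar⁽⁺⁾-2SAT.) -/

import Mathlib

/-- Evaluation of a literal `(v, s)` under an assignment `f`. -/
def litEval {α : Type*} (f : α → Bool) (l : α × Bool) : Bool :=
  if l.2 then f l.1 else !(f l.1)

/-- An assignment satisfies a 2-clause if at least one of its literals is true. -/
def satClause2 {α : Type*} (f : α → Bool) (c : (α × Bool) × (α × Bool)) : Prop :=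
  litEval f c.1 = true ∨ litEval f c.2 = true

/-- A 2CNF formula (a list of 2-clauses) is satisfiable if some assignment
satisfies all of its clauses. -/
def sat2CNF {α : Type*} (φ : List ((α × Bool) × (α × Bool))) : Prop :=
  ∃ f : α → Bool, ∀ c ∈ φ, satClause2 f c

/-- Translation of one clause (at index `i`) into same-polarity clauses. -/
def transClause {α : Type*} (i : ℕ) (c : (α × Bool) × (α × Bool)) :
    List (((α ⊕ ℕ) × Bool) × ((α ⊕ ℕ) × Bool)) :=
  if c.1.2 = c.2.2 then [((Sum.inl c.1.1, c.1.2), (Sum.inl c.2.1, c.2.2))]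
  else [((Sum.inl c.1.1, c.1.2), (Sum.inr i, c.1.2)),
        ((Sum.inr i, c.2.2), (Sum.inl c.2.1, c.2.2))]

theorem litEval_iff {α : Type*} (f : α → Bool) (l : α × Bool) :
    litEval f l = true ↔ f l.1 = l.2 := by
  cases h : l.2 <;> simp [litEval, h]

def List.enum {β : Type*} (l : List β) : List (ℕ × β) := l.zipIdx.map Prod.swap

theorem List.mk_mem_enum_iff_getElem? {β : Type*} {l : List β} {i : ℕ} {x : β} :
    (i, x) ∈ l.enum ↔ l[i]? = some x := by
  rw [← List.mk_mem_zipIdx_iff_getElem?, List.enum, List.mem_map]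
  constructor
  · rintro ⟨⟨a, b⟩, h, he⟩
    simp only [Prod.swap_prod_mk, Prod.mk.injEq] at he
    obtain ⟨rfl, rfl⟩ := he
    exact h
  · intro h
    exact ⟨(x, i), h, rfl⟩

/-- Every 2CNF formula over `α` is equisatisfiable with a positive-polarity
2CNF formula over `α ⊕ ℕ` (each clause has both literals of the same sign). -/
theorem twoSat_to_positive_polarity {α : Type*}
    (φ : List ((α × Bool) × (α × Bool))) :
    ∃ ψ : List (((α ⊕ ℕ) × Bool) × ((α ⊕ ℕ) × Bool)),
      (∀ c ∈ ψ, c.1.2 = c.2.2) ∧ (sat2CNF φ ↔ sat2CNF ψ) := by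
  refine ⟨(φ.enum).flatMap (fun p => transClause p.1 p.2), ?_, ?_⟩
  · intro c hc
    rw [List.mem_flatMap] at hc
    obtain ⟨⟨i, d⟩, _, hc⟩ := hc
    unfold transClause at hc
    split at hc <;> simp_all <;> rcases hc with h | h <;> simp [h]
  · constructor
    · rintro ⟨f, hf⟩
      refine ⟨Sum.elim f (fun i => match φ[i]? with
        | some c => if litEval f c.1 then c.2.2 else c.1.2
        | none => false), ?_⟩
      intro c hc
      rw [List.mem_flatMap] at hc
      obtain ⟨⟨i, d⟩, hd, hc⟩ := hc
      have hget : φ[i]? = some d := (List.mk_mem_enum_iff_getElem?).mp hd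
      have hdφ : d ∈ φ := List.mem_of_getElem? hget
      have hsat := hf d hdφ
      unfold transClause at hc
      split at hc
      · simp only [List.mem_singleton] at hc
        subst hc
        rcases hsat with h | h <;> [left; right] <;>
          simpa [litEval_iff] using (litEval_iff f _).mp h
      · rename_i hne
        simp only [List.mem_cons, List.not_mem_nil, or_false] at hc
        by_cases h1 : litEval f d.1 = true
        · rcases hc with rfl | rfl
          · left; simpa [litEval_iff] using (litEval_iff f _).mp h1
          · left
            have := (litEval_iff f d.1).mp h1
            simp [litEval_iff, hget, this]
        · have h2 : litEval f d.2 = true := hsat.resolve_left h1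
          rcases hc with rfl | rfl
          · right
            have : ¬ (f d.1.1 = d.1.2) := fun h => h1 ((litEval_iff f d.1).mpr h)
            simp only [litEval_iff]
            simp [hget, this]
          · right; simpa [litEval_iff] using (litEval_iff f _).mp h2
    · rintro ⟨g, hg⟩
      refine ⟨fun a => g (Sum.inl a), ?_⟩
      intro d hd
      obtain ⟨i, hi⟩ := List.getElem_of_mem hd
      have hmem : (i, d) ∈ φ.enum := by
        rw [List.mk_mem_enum_iff_getElem?]
        simp [List.getElem?_eq_getElem, hi.1, hi.2]
      by_cases hp : d.1.2 = d.2.2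
      · have hc : ((Sum.inl d.1.1, d.1.2), (Sum.inl d.2.1, d.2.2)) ∈
            (φ.enum).flatMap (fun p => transClause p.1 p.2) := by
          rw [List.mem_flatMap]
          exact ⟨_, hmem, by simp [transClause, hp]⟩
        have := hg _ hc
        rcases this with h | h <;> [left; right] <;>
          simpa [litEval_iff] using (litEval_iff _ _).mp h
      · have hc1 : ((Sum.inl d.1.1, d.1.2), (Sum.inr (i), d.1.2)) ∈
            (φ.enum).flatMap (fun p => transClause p.1 p.2) := by
          rw [List.mem_flatMap]
          exact ⟨_, hmem, by simp [transClause, hp]⟩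
        have hc2 : ((Sum.inr (i), d.2.2), (Sum.inl d.2.1, d.2.2)) ∈
            (φ.enum).flatMap (fun p => transClause p.1 p.2) := by
          rw [List.mem_flatMap]
          exact ⟨_, hmem, by simp [transClause, hp]⟩
        have h1 := hg _ hc1
        have h2 := hg _ hc2
        rcases h1 with h | h
        · left; simpa [litEval_iff] using (litEval_iff _ _).mp h
        · have hz : g (Sum.inr (i)) = d.1.2 := by
            simpa [litEval_iff] using h
          rcases h2 with h' | h'
          · exfalso
            have : g (Sum.inr (i)) = d.2.2 := by
              simpa [litEval_iff] using h'
            exact hp (hz ▸ this)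
          · right; simpa [litEval_iff] using (litEval_iff _ _).mp h'
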